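/- The sphere entropies converge to √2: with a(n) = (n/(2πe))^{n/2} · 2 π^{(n+1)/2} / Γ((n+1)/2) (which equals the entropy λ(Sⁿ) of the round shrinking n-sphere), the sequence a(n) tends to √2 as n → ∞. -/

import Mathlib

open Real Filter

/-- The entropy `λ(Sⁿ)` of the round shrinking `n`-sphere, in closed form:
`a n = (n/(2πe))^{n/2} · 2 π^{(n+1)/2} / Γ((n+1)/2)`. -/
noncomputable def sphereEntropy (n : ℕ) : ℝ :=
  ((n : ℝ) / (2 * π * Real.exp 1)) ^ ((n : ℝ) / 2) *
    (2 * π ^ (((n : ℝ) + 1) / 2)) / Real.Gamma (((n : ℝ) + 1) / 2)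

open Nat in
/-- The Gamma function at half-integers. -/
lemma sphereEntropy_gamma_half (k : ℕ) :
    Real.Gamma ((k : ℝ) + 1/2) = (2*k)! * Real.sqrt π / (4^k * k !) := by
  induction k with
  | zero => rw [show ((0:ℕ):ℝ) + 1/2 = 1/2 by norm_num, Real.Gamma_one_half_eq]; simp
  | succ k ih =>
    have hne : ((k : ℝ) + 1/2) ≠ 0 := by positivity
    have h1 : ((k+1 : ℕ) : ℝ) + 1/2 = ((k : ℝ) + 1/2) + 1 := by push_cast; ring
    rw [h1, Real.Gamma_add_one hne, ih]
    have h2 : 2*(k+1) = (2*k+1) + 1 := by ring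
    rw [h2, Nat.factorial_succ, Nat.factorial_succ, Nat.factorial_succ]
    have hk : (k ! : ℝ) ≠ 0 := Nat.cast_ne_zero.mpr (Nat.factorial_ne_zero k)
    have h4 : (4:ℝ)^k ≠ 0 := by positivity
    push_cast
    field_simp
    ring

open Nat in
/-- Even-index sphere entropies in terms of the Stirling sequence. -/
lemma sphereEntropy_even_eq (k : ℕ) (hk : 1 ≤ k) :
    sphereEntropy (2*k) =
      Real.sqrt 2 * (Stirling.stirlingSeq k / Stirling.stirlingSeq (2*k)) := by
  have hkR : (1:ℝ) ≤ (k:ℝ) := by exact_mod_cast hk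
  have hk0 : (0:ℝ) < k := by linarith
  unfold sphereEntropy Stirling.stirlingSeq
  have e1 : ((2*k : ℕ) : ℝ)/2 = ((k:ℕ):ℝ) := by push_cast; ring
  have e2 : (((2*k:ℕ):ℝ)+1)/2 = (k:ℝ) + 1/2 := by push_cast; ring
  rw [e1, e2, Real.rpow_natCast, sphereEntropy_gamma_half, Real.rpow_add pi_pos,
    Real.rpow_natCast, ← Real.sqrt_eq_rpow]
  have hc : ((2*k : ℕ) : ℝ) = 2*(k:ℝ) := by push_cast; ring
  rw [hc]
  have hs4 : Real.sqrt (2*(2*(k:ℝ))) = Real.sqrt 2 * Real.sqrt (2*(k:ℝ)) := by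
    rw [← Real.sqrt_mul (by norm_num) ]
  have hpow : ((2*(k:ℝ))/Real.exp 1)^(2*k)
      = 4^k * ((k:ℝ)/Real.exp 1)^k * ((k:ℝ)/Real.exp 1)^k := by
    rw [show (2*(k:ℝ))/Real.exp 1 = 2*((k:ℝ)/Real.exp 1) by ring, mul_pow, two_mul k,
      pow_add, pow_add, ← mul_assoc]
    congr 1
    · rw [← mul_pow]; norm_num
  rw [hs4, hpow]
  have h22 : Real.sqrt 2 * Real.sqrt 2 = 2 := Real.mul_self_sqrt (by norm_num)
  have hπ : Real.sqrt π ≠ 0 := by positivity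
  have hs2k : Real.sqrt (2*(k:ℝ)) ≠ 0 := by positivity
  have hfk : (k ! : ℝ) ≠ 0 := Nat.cast_ne_zero.mpr (Nat.factorial_ne_zero k)
  have hf2k : ((2*k)! : ℝ) ≠ 0 := Nat.cast_ne_zero.mpr (Nat.factorial_ne_zero _)
  have hke : ((k:ℝ)/Real.exp 1)^k ≠ 0 := by positivity
  have h4 : (4:ℝ)^k ≠ 0 := by positivity
  have hπ0 : (π:ℝ) ≠ 0 := pi_ne_zero
  have he : Real.exp 1 ≠ 0 := (Real.exp_pos 1).ne'
  have h3 : (Real.sqrt 2)^3 = 2 * Real.sqrt 2 := by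
    rw [show (3:ℕ) = 2+1 from rfl, pow_succ, Real.sq_sqrt (by norm_num : (0:ℝ) ≤ 2)]
  have hexp : Real.exp 1 ^ k = Real.exp (k:ℝ) := by rw [← Real.exp_nat_mul, mul_one]
  field_simp
  ring_nf
  have hπk : π ^ k * π⁻¹ ^ k = 1 := by rw [← mul_pow, mul_inv_cancel₀ hπ0, one_pow]
  linear_combination (2 * (k:ℝ) ^ k * (Real.exp 1)⁻¹ ^ k) * hπk - ((k:ℝ) ^ k * (Real.exp 1)⁻¹ ^ k) * h22

open Nat in
/-- Odd-index sphere entropies in terms of the Stirling sequence. -/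
lemma sphereEntropy_odd_eq (k : ℕ) (hk : 1 ≤ k) :
    sphereEntropy (2*k+1) =
      (Real.sqrt π / Stirling.stirlingSeq k) * (1 + (1/2)/(k:ℝ))^k *
        Real.sqrt (2 + 1/(k:ℝ)) / Real.sqrt (Real.exp 1) := by
  have hkR : (1:ℝ) ≤ (k:ℝ) := by exact_mod_cast hk
  have hk0 : (0:ℝ) < k := by linarith
  have he : (0:ℝ) < Real.exp 1 := Real.exp_pos 1
  unfold sphereEntropy Stirling.stirlingSeq
  have e1 : ((2*k+1 : ℕ) : ℝ)/2 = (k:ℝ) + 1/2 := by push_cast; ring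
  have e2 : (((2*k+1:ℕ):ℝ)+1)/2 = (k:ℝ) + 1 := by push_cast; ring
  have hb : (0:ℝ) < ((2*k+1:ℕ):ℝ) / (2*π*Real.exp 1) := by
    apply _root_.div_pos; · push_cast; positivity
    · positivity
  rw [e1, e2, Real.Gamma_nat_eq_factorial,
    Real.rpow_add hb, Real.rpow_natCast, ← Real.sqrt_eq_rpow,
    Real.rpow_add pi_pos, Real.rpow_natCast, Real.rpow_one]
  have hc : ((2*k+1 : ℕ) : ℝ) = 2*(k:ℝ)+1 := by push_cast; ring
  rw [hc]
  have hsb : Real.sqrt ((2*(k:ℝ)+1) / (2*π*Real.exp 1))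
      = Real.sqrt (2*(k:ℝ)+1) / (Real.sqrt 2 * Real.sqrt π * Real.sqrt (Real.exp 1)) := by
    rw [Real.sqrt_div (by positivity), Real.sqrt_mul (by positivity), Real.sqrt_mul (by norm_num)]
  have hsk : Real.sqrt (2*(k:ℝ)) = Real.sqrt 2 * Real.sqrt (k:ℝ) :=
    Real.sqrt_mul (by norm_num) _
  have h1 : (1 + (1/2)/(k:ℝ)) = (2*(k:ℝ)+1)/(2*(k:ℝ)) := by field_simp
  have h2 : (2 + 1/(k:ℝ)) = (2*(k:ℝ)+1)/(k:ℝ) := by field_simp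
  have h3 : Real.sqrt ((2*(k:ℝ)+1)/(k:ℝ)) = Real.sqrt (2*(k:ℝ)+1) / Real.sqrt (k:ℝ) :=
    Real.sqrt_div (by positivity) _
  rw [hsb, hsk, h1, h2, h3]
  have hdiv : ((2*(k:ℝ)+1)/(2*(k:ℝ)))^k = (2*(k:ℝ)+1)^k / (2*(k:ℝ))^k := div_pow _ _ _
  have hdiv2 : ((2*(k:ℝ)+1)/(2*π*Real.exp 1))^k = (2*(k:ℝ)+1)^k / (2*π*Real.exp 1)^k :=
    div_pow _ _ _
  have h22 : Real.sqrt 2 * Real.sqrt 2 = 2 := Real.mul_self_sqrt (by norm_num)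
  have hππ : Real.sqrt π * Real.sqrt π = π := Real.mul_self_sqrt pi_pos.le
  have hπ : Real.sqrt π ≠ 0 := by positivity
  have hsqk : Real.sqrt (k:ℝ) ≠ 0 := by positivity
  have hse : Real.sqrt (Real.exp 1) ≠ 0 := by positivity
  have hfk : (k ! : ℝ) ≠ 0 := Nat.cast_ne_zero.mpr (Nat.factorial_ne_zero k)
  have hke : ((k:ℝ)/Real.exp 1)^k ≠ 0 := by positivity
  have hπ0 : (π:ℝ) ≠ 0 := pi_ne_zero
  have he0 : Real.exp 1 ≠ 0 := he.ne'
  field_simp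
  ring_nf
  rw [Real.sq_sqrt pi_pos.le, Real.sq_sqrt (by norm_num : (0:ℝ) ≤ 2),
    show (k:ℝ) * π⁻¹ * (Real.exp 1)⁻¹ + π⁻¹ * (Real.exp 1)⁻¹ * (1 / 2)
      = ((k:ℝ) + 1 / 2) * π⁻¹ * (Real.exp 1)⁻¹ by ring,
    show (k:ℝ) * (k:ℝ)⁻¹ + (k:ℝ)⁻¹ * (1 / 2) = ((k:ℝ) + 1 / 2) * (k:ℝ)⁻¹ by ring]
  simp only [mul_pow]
  have hπk : π ^ k * π⁻¹ ^ k = 1 := by rw [← mul_pow, mul_inv_cancel₀ hπ0, one_pow]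
  have hkk : (k:ℝ) ^ k * (k:ℝ)⁻¹ ^ k = 1 := by rw [← mul_pow, mul_inv_cancel₀ hk0.ne', one_pow]
  linear_combination (2 * π * ((k:ℝ) + 1 / 2) ^ k * (Real.exp 1)⁻¹ ^ k) * hπk
    - (2 * π * ((k:ℝ) + 1 / 2) ^ k * (Real.exp 1)⁻¹ ^ k) * hkk

/-- A sequence converges if its even- and odd-index subsequences converge to the same limit. -/
lemma sphereEntropy_tendsto_of_parity {f : ℕ → ℝ} {l : ℝ}
    (he : Tendsto (fun k => f (2*k)) atTop (nhds l))
    (ho : Tendsto (fun k => f (2*k+1)) atTop (nhds l)) :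
    Tendsto f atTop (nhds l) := by
  rw [Metric.tendsto_atTop] at he ho ⊢
  intro ε hε
  obtain ⟨N₁, h₁⟩ := he ε hε
  obtain ⟨N₂, h₂⟩ := ho ε hε
  refine ⟨2*N₁ + 2*N₂ + 2, fun n hn => ?_⟩
  rcases Nat.even_or_odd n with ⟨m, hm⟩ | ⟨m, hm⟩
  · have hm' : N₁ ≤ m := by omega
    have := h₁ m hm'
    rwa [show 2*m = n by omega] at this
  · have hm' : N₂ ≤ m := by omega
    have := h₂ m hm'
    rwa [show 2*m+1 = n by omega] at this

/-- The sphere entropies `λ(Sⁿ)` converge to `√2` as `n → ∞`. -/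
theorem sphereEntropy_tendsto_sqrt_two :
    Tendsto sphereEntropy atTop (nhds (Real.sqrt 2)) := by
  have hπ : Real.sqrt π ≠ 0 := by positivity
  have hS := Stirling.tendsto_stirlingSeq_sqrt_pi
  have h2 : Tendsto (fun k : ℕ => 2*k) atTop atTop :=
    tendsto_atTop_mono (fun n => by simp [id]; omega) tendsto_id
  apply sphereEntropy_tendsto_of_parity
  · have t : Tendsto (fun k : ℕ =>
        Real.sqrt 2 * (Stirling.stirlingSeq k / Stirling.stirlingSeq (2*k))) atTop
        (nhds (Real.sqrt 2 * (Real.sqrt π / Real.sqrt π))) :=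
      Tendsto.const_mul _ (hS.div (hS.comp h2) hπ)
    rw [div_self hπ, mul_one] at t
    exact t.congr'
      (by filter_upwards [eventually_ge_atTop 1] with k hk using (sphereEntropy_even_eq k hk).symm)
  · have t1 : Tendsto (fun k : ℕ => Real.sqrt π / Stirling.stirlingSeq k) atTop (nhds 1) := by
      have h := (tendsto_const_nhds (x := Real.sqrt π)).div hS hπ
      rwa [div_self hπ] at h
    have t2 := Real.tendsto_one_add_div_pow_exp (1/2 : ℝ)
    have t3 : Tendsto (fun k : ℕ => Real.sqrt (2 + 1/(k:ℝ))) atTop (nhds (Real.sqrt 2)) := by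
      have h : Tendsto (fun k : ℕ => 2 + 1/(k:ℝ)) atTop (nhds (2 + 0)) :=
        (tendsto_const_div_atTop_nhds_zero_nat 1).const_add (2:ℝ)
      rw [add_zero] at h
      exact h.sqrt
    have tall := ((t1.mul t2).mul t3).div_const (Real.sqrt (Real.exp 1))
    have hval : 1 * Real.exp (1/2) * Real.sqrt 2 / Real.sqrt (Real.exp 1) = Real.sqrt 2 := by
      rw [one_mul, Real.exp_half, mul_comm, mul_div_assoc, div_self (by positivity), mul_one]
    rw [hval] at tall
    exact tall.congr'
      (by filter_upwards [eventually_ge_atTop 1] with k hk using (sphereEntropy_odd_eq k hk).symm)
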